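/- arXiv:1012.3306 — 2 statements merged into one kernel-verified Lean document; each statement's English description precedes it below -/
import Mathlib

section
/- For any m ≥ 0 and 0 ≤ k ≤ m+1, the integral over the standard m-simplex Δ_m = {(s_0,...,s_m) : s_i ≥ 0, s_0 + ... + s_m = 1} of the function (s_0 · s_1 ⋯ s_{k-1})^{-1/2} is at most π^k / (m-k)!. -/
open MeasureTheory Real
open scoped ENNReal

namespace SimplexAux

noncomputable def P (m k : ℕ) (s : Fin m → ℝ) : ℝ≥0∞ :=
  ∏ i ∈ Finset.range k,
    ENNReal.ofReal ((if h : i < m then s ⟨i, h⟩ else 1 - ∑ j, s j) ^ (-(1/2) : ℝ))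

def S (m : ℕ) : Set (Fin m → ℝ) := {s | (∀ i, 0 ≤ s i) ∧ ∑ i, s i ≤ 1}

lemma measSum (m : ℕ) : Measurable fun s : Fin m → ℝ => ∑ i, s i := by
  exact Finset.measurable_sum _ fun i _ => measurable_pi_apply i

lemma measS (m : ℕ) : MeasurableSet (S m) := by
  have : S m = (⋂ i, {s : Fin m → ℝ | (0:ℝ) ≤ s i}) ∩ {s | ∑ i, s i ≤ 1} := by
    ext s; simp [S, Set.mem_iInter]
  rw [this]
  exact (MeasurableSet.iInter fun i =>
    measurableSet_le measurable_const (measurable_pi_apply i)).inter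
    (measurableSet_le (measSum m) measurable_const)

lemma measP (m k : ℕ) : Measurable (P m k) := by
  refine Finset.measurable_prod _ fun i _ => ?_
  have hb : Measurable fun s : Fin m → ℝ => (if h : i < m then s ⟨i, h⟩ else 1 - ∑ j, s j) := by
    by_cases h : i < m
    · simpa [h] using measurable_pi_apply (⟨i, h⟩ : Fin m)
    · simp only [h]; exact measurable_const.sub (measSum m)
  have : Measurable fun y : ℝ => ENNReal.ofReal (y ^ (-(1/2) : ℝ)) := by fun_prop
  exact this.comp hb

lemma lint_snoc {n : ℕ} (f : (Fin (n + 1) → ℝ) → ℝ≥0∞) (hf : Measurable f) :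
    ∫⁻ s, f s = ∫⁻ s : Fin n → ℝ, ∫⁻ x : ℝ, f (Fin.snoc s x) := by
  have h := measurePreserving_piFinSuccAbove (fun _ : Fin (n + 1) => (volume : Measure ℝ))
    (Fin.last n)
  set e := MeasurableEquiv.piFinSuccAbove (fun _ : Fin (n + 1) => ℝ) (Fin.last n) with he
  have h1 : ∫⁻ s, f s = ∫⁻ s, (f ∘ e.symm) (e s) := by
    congr 1; ext s; simp
  rw [h1, volume_pi, h.lintegral_comp (hf.comp e.symm.measurable)]
  rw [lintegral_prod_symm _ ((hf.comp e.symm.measurable).aemeasurable)]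
  rw [← volume_pi]
  congr 1; ext s; congr 1; ext x
  show f (e.symm (x, s)) = _
  congr 1
  show (Fin.insertNthEquiv (fun _ => ℝ) (Fin.last n)) (x, s) = _
  simp [Fin.insertNthEquiv, Fin.snocEquiv]


lemma lint_Icc_ofReal {c : ℝ} (hc : 0 ≤ c) {f : ℝ → ℝ}
    (hint : IntervalIntegrable f volume 0 c) (hpos : ∀ x ∈ Set.Ioc 0 c, 0 ≤ f x) :
    ∫⁻ x in Set.Icc 0 c, ENNReal.ofReal (f x) = ENNReal.ofReal (∫ x in (0:ℝ)..c, f x) := by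
  rw [← setLIntegral_congr (MeasureTheory.Ioc_ae_eq_Icc (μ := volume) (a := 0) (b := c)),
    intervalIntegral.integral_of_le hc,
    ofReal_integral_eq_lintegral_ofReal]
  · exact (intervalIntegrable_iff_integrableOn_Ioc_of_le hc).mp hint
  · exact (ae_restrict_iff' measurableSet_Ioc).2 (Filter.Eventually.of_forall hpos)

lemma lint_I1 {c : ℝ} (hc : 0 ≤ c) :
    ∫⁻ x in Set.Icc 0 c, ENNReal.ofReal (x ^ (-(1/2) : ℝ)) = ENNReal.ofReal (2 * Real.sqrt c) := by
  rw [lint_Icc_ofReal hc (intervalIntegral.intervalIntegrable_rpow' (by norm_num))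
    (fun x hx => Real.rpow_nonneg hx.1.le _)]
  rw [integral_rpow (Or.inl (by norm_num))]
  norm_num
  rw [Real.sqrt_eq_rpow]
  rw [show c ^ (1/2:ℝ) / (1/2) = 2 * c ^ (1/2:ℝ) by ring, ENNReal.ofReal_mul (by norm_num)]; norm_num

lemma lint_I2 {c : ℝ} (hc : 0 ≤ c) (j : ℕ) :
    ∫⁻ x in Set.Icc 0 c, ENNReal.ofReal ((c - x) ^ j)
      = ENNReal.ofReal (c ^ (j+1) / (j+1)) := by
  rw [lint_Icc_ofReal hc ((by fun_prop : Continuous fun x : ℝ => (c - x) ^ j).intervalIntegrable _ _)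
    (fun x hx => pow_nonneg (sub_nonneg.2 hx.2) _)]
  congr 1
  have := intervalIntegral.integral_comp_sub_left (a := 0) (b := c) (fun u : ℝ => u ^ j) c
  simp only [sub_self, sub_zero] at this
  rw [this, integral_pow]
  simp

lemma lint_I3 {c : ℝ} (hc : 0 ≤ c) :
    ∫⁻ x in Set.Icc 0 c, ENNReal.ofReal ((c - x) ^ (-(1/2) : ℝ))
      = ENNReal.ofReal (2 * Real.sqrt c) := by
  rw [lint_Icc_ofReal hc ?int (fun x hx => Real.rpow_nonneg (sub_nonneg.2 hx.2) _)]
  case int =>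
    have := (intervalIntegral.intervalIntegrable_rpow' (a := 0) (b := c) (r := -(1/2)) (by norm_num)).comp_sub_left c
    simpa using this.symm
  have := intervalIntegral.integral_comp_sub_left (a := 0) (b := c)
    (fun u : ℝ => u ^ (-(1/2) : ℝ)) c
  simp only [sub_self, sub_zero] at this
  rw [this, integral_rpow (Or.inl (by norm_num))]
  norm_num
  rw [Real.sqrt_eq_rpow]
  rw [show c ^ (1/2:ℝ) / (1/2) = 2 * c ^ (1/2:ℝ) by ring, ENNReal.ofReal_mul (by norm_num)]; norm_num


lemma rpow_neg_half_le {c z : ℝ} (h0 : 0 < c) (hz : c / 2 ≤ z) :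
    z ^ (-(1/2) : ℝ) ≤ Real.sqrt (2 / c) := by
  have hz0 : 0 < z := lt_of_lt_of_le (by positivity) hz
  rw [Real.rpow_neg hz0.le, ← Real.sqrt_eq_rpow]
  rw [show (2:ℝ)/c = (c/2)⁻¹ by field_simp, Real.sqrt_inv]
  exact inv_anti₀ (Real.sqrt_pos.2 (by positivity)) (Real.sqrt_le_sqrt hz)

lemma lint_beta {c : ℝ} (hc : 0 ≤ c) (hc1 : c ≤ 1) :
    ∫⁻ x in Set.Icc 0 c,
        ENNReal.ofReal (x ^ (-(1/2) : ℝ)) * ENNReal.ofReal ((c - x) ^ (-(1/2) : ℝ))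
      ≤ ENNReal.ofReal 6 := by
  rcases hc.eq_or_lt with h0 | h0
  · rw [← h0, setLIntegral_measure_zero]
    · exact zero_le
    · simp
  · have key : ∀ x ∈ Set.Icc (0:ℝ) c,
        ENNReal.ofReal (x ^ (-(1/2) : ℝ)) * ENNReal.ofReal ((c - x) ^ (-(1/2) : ℝ))
        ≤ ENNReal.ofReal (Real.sqrt (2/c)) *
            (ENNReal.ofReal (x ^ (-(1/2):ℝ)) + ENNReal.ofReal ((c - x) ^ (-(1/2):ℝ))) := by
      intro x hx
      have hx0 : 0 ≤ x := hx.1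
      have hxr : 0 ≤ x ^ (-(1/2):ℝ) := Real.rpow_nonneg hx0 _
      have hcxr : 0 ≤ (c - x) ^ (-(1/2):ℝ) := Real.rpow_nonneg (sub_nonneg.2 hx.2) _
      have hb : x ^ (-(1/2):ℝ) * (c - x) ^ (-(1/2):ℝ)
          ≤ Real.sqrt (2/c) * (x ^ (-(1/2):ℝ) + (c - x) ^ (-(1/2):ℝ)) := by
        have hs0 : 0 ≤ Real.sqrt (2/c) := Real.sqrt_nonneg _
        rcases le_total x (c/2) with h | h
        · have h1 : (c - x) ^ (-(1/2):ℝ) ≤ Real.sqrt (2/c) :=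
            rpow_neg_half_le h0 (by linarith)
          nlinarith
        · have h1 : x ^ (-(1/2):ℝ) ≤ Real.sqrt (2/c) := rpow_neg_half_le h0 h
          nlinarith
      calc ENNReal.ofReal (x ^ (-(1/2) : ℝ)) * ENNReal.ofReal ((c - x) ^ (-(1/2) : ℝ))
          = ENNReal.ofReal (x ^ (-(1/2):ℝ) * (c - x) ^ (-(1/2):ℝ)) :=
            (ENNReal.ofReal_mul hxr).symm
        _ ≤ ENNReal.ofReal (Real.sqrt (2/c) * (x ^ (-(1/2):ℝ) + (c - x) ^ (-(1/2):ℝ))) :=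
            ENNReal.ofReal_le_ofReal hb
        _ = ENNReal.ofReal (Real.sqrt (2/c)) *
              ENNReal.ofReal (x ^ (-(1/2):ℝ) + (c - x) ^ (-(1/2):ℝ)) :=
            ENNReal.ofReal_mul (Real.sqrt_nonneg _)
        _ ≤ _ := mul_le_mul_right ENNReal.ofReal_add_le _
    calc ∫⁻ x in Set.Icc 0 c,
            ENNReal.ofReal (x ^ (-(1/2) : ℝ)) * ENNReal.ofReal ((c - x) ^ (-(1/2) : ℝ))
        ≤ ∫⁻ x in Set.Icc 0 c, ENNReal.ofReal (Real.sqrt (2/c)) *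
            (ENNReal.ofReal (x ^ (-(1/2):ℝ)) + ENNReal.ofReal ((c - x) ^ (-(1/2):ℝ))) :=
          setLIntegral_mono' measurableSet_Icc key
      _ = ENNReal.ofReal (Real.sqrt (2/c)) *
            ((∫⁻ x in Set.Icc 0 c, ENNReal.ofReal (x ^ (-(1/2):ℝ))) +
             ∫⁻ x in Set.Icc 0 c, ENNReal.ofReal ((c - x) ^ (-(1/2):ℝ))) := by
          rw [lintegral_const_mul' _ _ ENNReal.ofReal_ne_top, lintegral_add_left (by fun_prop)]
      _ = ENNReal.ofReal (Real.sqrt (2/c)) *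
            (ENNReal.ofReal (2 * Real.sqrt c) + ENNReal.ofReal (2 * Real.sqrt c)) := by
          rw [lint_I1 hc, lint_I3 hc]
      _ ≤ ENNReal.ofReal 6 := by
          rw [← ENNReal.ofReal_add (by positivity) (by positivity), ← ENNReal.ofReal_mul
            (Real.sqrt_nonneg _)]
          refine ENNReal.ofReal_le_ofReal ?_
          have h2 : Real.sqrt (2/c) * Real.sqrt c = Real.sqrt 2 := by
            rw [← Real.sqrt_mul (by positivity), div_mul_cancel₀ _ (ne_of_gt h0)]
          have h3 : Real.sqrt 2 ≤ 1.5 := by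
            rw [show (1.5:ℝ) = Real.sqrt (1.5 ^ 2) by rw [Real.sqrt_sq]; norm_num]
            exact Real.sqrt_le_sqrt (by norm_num)
          nlinarith [Real.sqrt_nonneg (2/c), Real.sqrt_nonneg c]


lemma P_ne_top (m k : ℕ) (s : Fin m → ℝ) : P m k s ≠ ⊤ := by
  unfold P
  refine ne_of_lt (ENNReal.prod_lt_top fun i _ => ?_)
  exact ENNReal.ofReal_lt_top

lemma sum_snoc {n : ℕ} (s : Fin n → ℝ) (x : ℝ) :
    ∑ i, Fin.snoc s x i = ∑ i, s i + x := by
  rw [Fin.sum_univ_castSucc]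
  simp

lemma P_snoc_le {m k : ℕ} (hk : k ≤ m) (s : Fin m → ℝ) (x : ℝ) :
    P (m+1) k (Fin.snoc s x) = P m k s := by
  unfold P
  refine Finset.prod_congr rfl fun i hi => ?_
  have hik : i < k := Finset.mem_range.mp hi
  have him : i < m := lt_of_lt_of_le hik hk
  have him1 : i < m + 1 := him.trans (Nat.lt_succ_self m)
  rw [dif_pos him1, dif_pos him]
  congr 2
  show (Fin.snoc s x : Fin (m+1) → ℝ) (Fin.castSucc ⟨i, him⟩) = s ⟨i, him⟩
  rw [Fin.snoc_castSucc]

lemma P_snoc_succ {m : ℕ} (s : Fin m → ℝ) (x : ℝ) :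
    P (m+1) (m+1) (Fin.snoc s x) = P m m s * ENNReal.ofReal (x ^ (-(1/2) : ℝ)) := by
  have h1 := Finset.prod_range_succ (fun i => ENNReal.ofReal
    ((if h : i < m + 1 then (Fin.snoc s x : Fin (m+1) → ℝ) ⟨i, h⟩
      else 1 - ∑ j, (Fin.snoc s x : Fin (m+1) → ℝ) j) ^ (-(1/2) : ℝ))) m
  unfold P
  rw [h1]
  have h2 : P (m+1) m (Fin.snoc s x) = P m m s := P_snoc_le le_rfl s x
  unfold P at h2
  rw [h2, dif_pos (Nat.lt_succ_self m)]
  congr 3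
  show (Fin.snoc s x : Fin (m+1) → ℝ) (Fin.last m) = x
  exact Fin.snoc_last _ _

lemma P_snoc_top {m : ℕ} (s : Fin m → ℝ) (x : ℝ) :
    P (m+1) (m+2) (Fin.snoc s x) = P m m s * ENNReal.ofReal (x ^ (-(1/2) : ℝ))
      * ENNReal.ofReal ((1 - ∑ i, s i - x) ^ (-(1/2) : ℝ)) := by
  have h1 := Finset.prod_range_succ (fun i => ENNReal.ofReal
    ((if h : i < m + 1 then (Fin.snoc s x : Fin (m+1) → ℝ) ⟨i, h⟩
      else 1 - ∑ j, (Fin.snoc s x : Fin (m+1) → ℝ) j) ^ (-(1/2) : ℝ))) (m+1)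
  have h2 : P (m+1) (m+1) (Fin.snoc s x) = P m m s * ENNReal.ofReal (x ^ (-(1/2) : ℝ)) :=
    P_snoc_succ s x
  unfold P
  unfold P at h2
  rw [h1, h2, dif_neg (lt_irrefl (m+1)), sum_snoc]
  congr 2
  ring

lemma snoc_mem_S {m : ℕ} (s : Fin m → ℝ) (x : ℝ) (hs : ∀ i, 0 ≤ s i) :
    Fin.snoc s x ∈ S (m+1) ↔ x ∈ Set.Icc 0 (1 - ∑ i, s i) := by
  constructor
  · rintro ⟨h1, h2⟩
    refine ⟨by simpa using h1 (Fin.last m), ?_⟩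
    rw [sum_snoc] at h2; linarith
  · rintro ⟨hx0, hx1⟩
    refine ⟨fun i => ?_, ?_⟩
    · induction i using Fin.lastCases with
      | last => simpa using hx0
      | cast i => simpa using hs i
    · rw [sum_snoc]; linarith

lemma snoc_not_mem_S {m : ℕ} (s : Fin m → ℝ) (x : ℝ) (hs : ¬ ∀ i, 0 ≤ s i) :
    Fin.snoc s x ∉ S (m+1) := by
  push_neg at hs
  obtain ⟨i, hi⟩ := hs
  rintro ⟨h1, -⟩
  have := h1 (Fin.castSucc i)
  rw [Fin.snoc_castSucc] at this
  linarith


lemma inner_eq (m k j : ℕ) (hk : k ≤ m + 1) (s : Fin m → ℝ) :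
    ∫⁻ x, (S (m+1)).indicator
        (fun t => P (m+1) k t * ENNReal.ofReal ((1 - ∑ i, t i) ^ j)) (Fin.snoc s x)
      = (S m).indicator (fun s => P m (min k m) s *
          ∫⁻ x in Set.Icc 0 (1 - ∑ i, s i),
            (if m < k then ENNReal.ofReal (x ^ (-(1/2) : ℝ)) else 1)
              * ENNReal.ofReal ((1 - ∑ i, s i - x) ^ j)) s := by
  by_cases hs : ∀ i, 0 ≤ s i
  · have hpt : ∀ x : ℝ, (S (m+1)).indicator
        (fun t => P (m+1) k t * ENNReal.ofReal ((1 - ∑ i, t i) ^ j)) (Fin.snoc s x)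
        = (Set.Icc 0 (1 - ∑ i, s i)).indicator
            (fun x => P m (min k m) s *
              ((if m < k then ENNReal.ofReal (x ^ (-(1/2) : ℝ)) else 1)
                * ENNReal.ofReal ((1 - ∑ i, s i - x) ^ j))) x := by
      intro x
      by_cases hx : x ∈ Set.Icc (0:ℝ) (1 - ∑ i, s i)
      · rw [Set.indicator_of_mem ((snoc_mem_S s x hs).2 hx), Set.indicator_of_mem hx]
        have hw : (1 : ℝ) - ∑ i, Fin.snoc s x i = 1 - ∑ i, s i - x := by
          rw [sum_snoc]; ring
        rw [hw]
        rcases lt_or_ge m k with hmk | hmk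
        · have hk1 : k = m + 1 := le_antisymm hk hmk
          subst hk1
          rw [P_snoc_succ, if_pos (Nat.lt_succ_self m), min_eq_right (Nat.le_succ m)]
          ring
        · rw [P_snoc_le hmk, if_neg (not_lt.2 hmk), min_eq_left hmk, one_mul]
      · rw [Set.indicator_of_notMem (fun h => hx ((snoc_mem_S s x hs).1 h)),
          Set.indicator_of_notMem hx]
    rw [lintegral_congr hpt, lintegral_indicator measurableSet_Icc,
      lintegral_const_mul' _ _ (P_ne_top m (min k m) s)]
    by_cases hsum : ∑ i, s i ≤ 1
    · have hmem : s ∈ S m := ⟨hs, hsum⟩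
      rw [Set.indicator_of_mem hmem]
    · rw [Set.Icc_eq_empty (by rw [not_le]; linarith [not_le.mp hsum]),
        Measure.restrict_empty, lintegral_zero_measure, mul_zero]
      have hmem : s ∉ S m := fun h => hsum h.2
      rw [Set.indicator_of_notMem hmem]
  · have hpt : ∀ x : ℝ, (S (m+1)).indicator
        (fun t => P (m+1) k t * ENNReal.ofReal ((1 - ∑ i, t i) ^ j)) (Fin.snoc s x) = 0 :=
      fun x => Set.indicator_of_notMem (snoc_not_mem_S s x hs) _
    rw [lintegral_congr hpt, lintegral_zero]
    have hmem : s ∉ S m := fun h => hs h.1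
    rw [Set.indicator_of_notMem hmem]

lemma inner_eq' (m : ℕ) (s : Fin m → ℝ) :
    ∫⁻ x, (S (m+1)).indicator (P (m+1) (m+2)) (Fin.snoc s x)
      = (S m).indicator (fun s => P m m s *
          ∫⁻ x in Set.Icc 0 (1 - ∑ i, s i),
            ENNReal.ofReal (x ^ (-(1/2) : ℝ))
              * ENNReal.ofReal ((1 - ∑ i, s i - x) ^ (-(1/2) : ℝ))) s := by
  by_cases hs : ∀ i, 0 ≤ s i
  · have hpt : ∀ x : ℝ, (S (m+1)).indicator (P (m+1) (m+2)) (Fin.snoc s x)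
        = (Set.Icc 0 (1 - ∑ i, s i)).indicator
            (fun x => P m m s *
              (ENNReal.ofReal (x ^ (-(1/2) : ℝ))
                * ENNReal.ofReal ((1 - ∑ i, s i - x) ^ (-(1/2) : ℝ)))) x := by
      intro x
      by_cases hx : x ∈ Set.Icc (0:ℝ) (1 - ∑ i, s i)
      · rw [Set.indicator_of_mem ((snoc_mem_S s x hs).2 hx), Set.indicator_of_mem hx,
          P_snoc_top]
        ring
      · rw [Set.indicator_of_notMem (fun h => hx ((snoc_mem_S s x hs).1 h)),
          Set.indicator_of_notMem hx]
    rw [lintegral_congr hpt, lintegral_indicator measurableSet_Icc,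
      lintegral_const_mul' _ _ (P_ne_top m m s)]
    by_cases hsum : ∑ i, s i ≤ 1
    · have hmem : s ∈ S m := ⟨hs, hsum⟩
      rw [Set.indicator_of_mem hmem]
    · rw [Set.Icc_eq_empty (by rw [not_le]; linarith [not_le.mp hsum]),
        Measure.restrict_empty, lintegral_zero_measure, mul_zero]
      have hmem : s ∉ S m := fun h => hsum h.2
      rw [Set.indicator_of_notMem hmem]
  · have hpt : ∀ x : ℝ, (S (m+1)).indicator (P (m+1) (m+2)) (Fin.snoc s x) = 0 :=
      fun x => Set.indicator_of_notMem (snoc_not_mem_S s x hs) _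
    rw [lintegral_congr hpt, lintegral_zero]
    have hmem : s ∉ S m := fun h => hs h.1
    rw [Set.indicator_of_notMem hmem]


lemma W : ∀ m k j : ℕ, k ≤ m →
    (∫⁻ s in S m, P m k s * ENNReal.ofReal ((1 - ∑ i, s i) ^ j))
      ≤ ENNReal.ofReal (2 ^ k * (Nat.factorial j) / (Nat.factorial (m - k + j))) := by
  intro m
  induction m with
  | zero =>
    intro k j hk
    have hk0 : k = 0 := Nat.le_zero.mp hk
    subst hk0
    have hP : ∀ s : Fin 0 → ℝ, P 0 0 s * ENNReal.ofReal ((1 - ∑ i, s i) ^ j) = 1 := by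
      intro s; simp [P]
    have h1 : (∫⁻ s in S 0, P 0 0 s * ENNReal.ofReal ((1 - ∑ i, s i) ^ j))
        = volume (S 0) := by
      rw [lintegral_congr hP]
      simp
    have hS : S 0 = Set.univ := by
      ext s
      simp [S]
    have h2 : volume (S 0) = 1 := by
      rw [hS, volume_pi, Measure.pi_univ]
      simp
    rw [h1, h2]
    have h3 : (2:ℝ) ^ 0 * (Nat.factorial j) / (Nat.factorial (0 - 0 + j)) = 1 := by
      simp [div_self, Nat.cast_ne_zero.2 (Nat.factorial_ne_zero j)]
    rw [h3, ENNReal.ofReal_one]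
  | succ m ih =>
    intro k j hk
    have hmeasF : Measurable
        (fun t : Fin (m+1) → ℝ => P (m+1) k t * ENNReal.ofReal ((1 - ∑ i, t i) ^ j)) :=
      (measP _ _).mul (((measurable_const.sub (measSum _)).pow_const j).ennreal_ofReal)
    rw [← lintegral_indicator (measS (m+1)), lint_snoc _ (hmeasF.indicator (measS _)),
      lintegral_congr (inner_eq m k j hk), lintegral_indicator (measS m)]
    by_cases hkm : k ≤ m
    · have hmin : min k m = k := min_eq_left hkm
      rw [hmin]
      have hbound : ∀ s ∈ S m,
          P m k s * (∫⁻ x in Set.Icc 0 (1 - ∑ i, s i),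
            (if m < k then ENNReal.ofReal (x ^ (-(1/2) : ℝ)) else 1)
              * ENNReal.ofReal ((1 - ∑ i, s i - x) ^ j))
          ≤ (P m k s * ENNReal.ofReal ((1 - ∑ i, s i) ^ (j+1))) * ENNReal.ofReal ((j+1:ℝ)⁻¹) := by
        intro s hsmem
        have hc : (0:ℝ) ≤ 1 - ∑ i, s i := by linarith [hsmem.2]
        have hInner : (∫⁻ x in Set.Icc 0 (1 - ∑ i, s i),
            (if m < k then ENNReal.ofReal (x ^ (-(1/2) : ℝ)) else 1)
              * ENNReal.ofReal ((1 - ∑ i, s i - x) ^ j))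
            = ENNReal.ofReal ((1 - ∑ i, s i) ^ (j+1)) * ENNReal.ofReal ((j+1:ℝ)⁻¹) := by
          simp only [if_neg (not_lt.2 hkm), one_mul]
          rw [lint_I2 hc j, div_eq_mul_inv, ENNReal.ofReal_mul (by positivity)]
        rw [hInner, ← mul_assoc]
      calc (∫⁻ s in S m, P m k s * ∫⁻ x in Set.Icc 0 (1 - ∑ i, s i),
              (if m < k then ENNReal.ofReal (x ^ (-(1/2) : ℝ)) else 1)
                * ENNReal.ofReal ((1 - ∑ i, s i - x) ^ j))
          ≤ ∫⁻ s in S m, (P m k s * ENNReal.ofReal ((1 - ∑ i, s i) ^ (j+1)))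
              * ENNReal.ofReal ((j+1:ℝ)⁻¹) := setLIntegral_mono' (measS m) hbound
        _ = (∫⁻ s in S m, P m k s * ENNReal.ofReal ((1 - ∑ i, s i) ^ (j+1)))
              * ENNReal.ofReal ((j+1:ℝ)⁻¹) :=
            lintegral_mul_const' _ _ ENNReal.ofReal_ne_top
        _ ≤ ENNReal.ofReal (2 ^ k * (Nat.factorial (j+1)) / (Nat.factorial (m - k + (j+1))))
              * ENNReal.ofReal ((j+1:ℝ)⁻¹) := mul_le_mul_left (ih k (j+1) hkm) _
        _ = ENNReal.ofReal (2 ^ k * (Nat.factorial j) / (Nat.factorial (m + 1 - k + j))) := by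
            rw [← ENNReal.ofReal_mul (by positivity)]
            congr 1
            have hd : m + 1 - k + j = m - k + (j + 1) := by omega
            rw [hd, Nat.factorial_succ]
            have hne : ((Nat.factorial (m - k + (j+1)) : ℝ)) ≠ 0 :=
              Nat.cast_ne_zero.2 (Nat.factorial_ne_zero _)
            have hj : ((j:ℝ) + 1) ≠ 0 := by positivity
            push_cast
            field_simp
    · have hk1 : k = m + 1 := by omega
      subst hk1
      have hmin : min (m+1) m = m := min_eq_right (Nat.le_succ m)
      rw [hmin]
      have hbound : ∀ s ∈ S m,
          P m m s * (∫⁻ x in Set.Icc 0 (1 - ∑ i, s i),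
            (if m < m + 1 then ENNReal.ofReal (x ^ (-(1/2) : ℝ)) else 1)
              * ENNReal.ofReal ((1 - ∑ i, s i - x) ^ j))
          ≤ (P m m s * ENNReal.ofReal ((1 - ∑ i, s i) ^ j)) * ENNReal.ofReal 2 := by
        intro s hsmem
        have hc : (0:ℝ) ≤ 1 - ∑ i, s i := by linarith [hsmem.2]
        have hc1 : (1 - ∑ i, s i : ℝ) ≤ 1 := by
          have hnn : (0:ℝ) ≤ ∑ i, s i :=
            Finset.sum_nonneg (fun i _ => hsmem.1 i)
          linarith
        have hInner : (∫⁻ x in Set.Icc 0 (1 - ∑ i, s i),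
            (if m < m + 1 then ENNReal.ofReal (x ^ (-(1/2) : ℝ)) else 1)
              * ENNReal.ofReal ((1 - ∑ i, s i - x) ^ j))
            ≤ ENNReal.ofReal ((1 - ∑ i, s i) ^ j) * ENNReal.ofReal 2 := by
          simp only [if_pos (Nat.lt_succ_self m)]
          calc (∫⁻ x in Set.Icc 0 (1 - ∑ i, s i),
                ENNReal.ofReal (x ^ (-(1/2) : ℝ))
                  * ENNReal.ofReal ((1 - ∑ i, s i - x) ^ j))
              ≤ ∫⁻ x in Set.Icc 0 (1 - ∑ i, s i),
                ENNReal.ofReal (x ^ (-(1/2) : ℝ))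
                  * ENNReal.ofReal ((1 - ∑ i, s i) ^ j) := by
                refine setLIntegral_mono' measurableSet_Icc fun x hx => ?_
                refine mul_le_mul_right (ENNReal.ofReal_le_ofReal ?_) _
                exact pow_le_pow_left₀ (by linarith [hx.2]) (by linarith [hx.1]) j
            _ = (∫⁻ x in Set.Icc 0 (1 - ∑ i, s i), ENNReal.ofReal (x ^ (-(1/2) : ℝ)))
                  * ENNReal.ofReal ((1 - ∑ i, s i) ^ j) :=
                lintegral_mul_const' _ _ ENNReal.ofReal_ne_top
            _ = ENNReal.ofReal (2 * Real.sqrt (1 - ∑ i, s i))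
                  * ENNReal.ofReal ((1 - ∑ i, s i) ^ j) := by rw [lint_I1 hc]
            _ ≤ ENNReal.ofReal 2 * ENNReal.ofReal ((1 - ∑ i, s i) ^ j) := by
                refine mul_le_mul_left (ENNReal.ofReal_le_ofReal ?_) _
                have := Real.sqrt_le_one.2 hc1
                linarith [Real.sqrt_nonneg (1 - ∑ i, s i)]
            _ = ENNReal.ofReal ((1 - ∑ i, s i) ^ j) * ENNReal.ofReal 2 := mul_comm _ _
        calc P m m s * (∫⁻ x in Set.Icc 0 (1 - ∑ i, s i),
              (if m < m + 1 then ENNReal.ofReal (x ^ (-(1/2) : ℝ)) else 1)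
                * ENNReal.ofReal ((1 - ∑ i, s i - x) ^ j))
            ≤ P m m s * (ENNReal.ofReal ((1 - ∑ i, s i) ^ j) * ENNReal.ofReal 2) :=
              mul_le_mul_right hInner _
          _ = (P m m s * ENNReal.ofReal ((1 - ∑ i, s i) ^ j)) * ENNReal.ofReal 2 :=
              (mul_assoc _ _ _).symm
      calc (∫⁻ s in S m, P m m s * ∫⁻ x in Set.Icc 0 (1 - ∑ i, s i),
              (if m < m + 1 then ENNReal.ofReal (x ^ (-(1/2) : ℝ)) else 1)
                * ENNReal.ofReal ((1 - ∑ i, s i - x) ^ j))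
          ≤ ∫⁻ s in S m, (P m m s * ENNReal.ofReal ((1 - ∑ i, s i) ^ j))
              * ENNReal.ofReal 2 := setLIntegral_mono' (measS m) hbound
        _ = (∫⁻ s in S m, P m m s * ENNReal.ofReal ((1 - ∑ i, s i) ^ j))
              * ENNReal.ofReal 2 := lintegral_mul_const' _ _ ENNReal.ofReal_ne_top
        _ ≤ ENNReal.ofReal (2 ^ m * (Nat.factorial j) / (Nat.factorial (m - m + j)))
              * ENNReal.ofReal 2 := mul_le_mul_left (ih m j le_rfl) _
        _ = ENNReal.ofReal (2 ^ (m+1) * (Nat.factorial j)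
              / (Nat.factorial (m + 1 - (m+1) + j))) := by
            rw [← ENNReal.ofReal_mul (by positivity)]
            congr 1
            have h1 : m - m + j = j := by omega
            have h2 : m + 1 - (m+1) + j = j := by omega
            rw [h1, h2]
            ring

end SimplexAux

open SimplexAux in
/-- The integral over the standard `m`-simplex (parametrized by its first `m`
barycentric coordinates `s 0, …, s (m-1)`, with `s_m := 1 - ∑ s i`) of
`(s_0 ⋯ s_{k-1})^{-1/2}` is at most `π^k / (m-k)!`. -/
theorem simplex_integral_bound (m k : ℕ) (hk : k ≤ m + 1) :
    (∫⁻ s in {s : Fin m → ℝ | (∀ i, 0 ≤ s i) ∧ ∑ i, s i ≤ 1},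
        ∏ i ∈ Finset.range k,
          ENNReal.ofReal
            ((if h : i < m then s ⟨i, h⟩ else 1 - ∑ j, s j) ^ (-(1/2) : ℝ))) ≤
      ENNReal.ofReal (π ^ k / (Nat.factorial (m - k))) := by
  show (∫⁻ s in S m, P m k s) ≤ _
  have hπ : (3:ℝ) < π := Real.pi_gt_three
  by_cases hkm : k ≤ m
  · have h0 : ∀ s : Fin m → ℝ, P m k s
        = P m k s * ENNReal.ofReal ((1 - ∑ i, s i) ^ 0) := by
      intro s; simp
    calc (∫⁻ s in S m, P m k s)
        = ∫⁻ s in S m, P m k s * ENNReal.ofReal ((1 - ∑ i, s i) ^ 0) :=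
          lintegral_congr h0
      _ ≤ ENNReal.ofReal (2 ^ k * (Nat.factorial 0) / (Nat.factorial (m - k + 0))) :=
          W m k 0 hkm
      _ ≤ ENNReal.ofReal (π ^ k / (Nat.factorial (m - k))) := by
          refine ENNReal.ofReal_le_ofReal ?_
          simp only [Nat.factorial_zero, Nat.cast_one, mul_one, Nat.add_zero]
          have hD : (0:ℝ) < (Nat.factorial (m - k) : ℝ) :=
            Nat.cast_pos.2 (Nat.factorial_pos _)
          have hpow : (2:ℝ) ^ k ≤ π ^ k := pow_le_pow_left₀ (by norm_num) (by linarith) k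
          gcongr
  · have hk1 : k = m + 1 := by omega
    subst hk1
    cases m with
    | zero =>
      have hS : S 0 = Set.univ := by ext s; simp [S]
      have hP : ∀ s : Fin 0 → ℝ, P 0 1 s = 1 := by
        intro s; simp [P]
      calc (∫⁻ s in S 0, P 0 1 s) = volume (S 0) := by
            rw [lintegral_congr hP]; simp
        _ = 1 := by rw [hS, volume_pi, Measure.pi_univ]; simp
        _ ≤ ENNReal.ofReal (π ^ 1 / (Nat.factorial (0 - 1))) := by
            rw [← ENNReal.ofReal_one]
            refine ENNReal.ofReal_le_ofReal ?_
            norm_num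
            linarith
    | succ n =>
      have hmeasF : Measurable (P (n+1) (n+2)) := measP _ _
      rw [← lintegral_indicator (measS (n+1)),
        lint_snoc _ (hmeasF.indicator (measS _)),
        lintegral_congr (fun s => inner_eq' n s),
        lintegral_indicator (measS n)]
      have hbound : ∀ s ∈ S n,
          P n n s * (∫⁻ x in Set.Icc 0 (1 - ∑ i, s i),
            ENNReal.ofReal (x ^ (-(1/2):ℝ))
              * ENNReal.ofReal ((1 - ∑ i, s i - x) ^ (-(1/2):ℝ)))
          ≤ (P n n s * ENNReal.ofReal ((1 - ∑ i, s i) ^ 0)) * ENNReal.ofReal 6 := by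
        intro s hsmem
        have hc : (0:ℝ) ≤ 1 - ∑ i, s i := by linarith [hsmem.2]
        have hc1 : (1 - ∑ i, s i : ℝ) ≤ 1 := by
          have hnn : (0:ℝ) ≤ ∑ i, s i := Finset.sum_nonneg (fun i _ => hsmem.1 i)
          linarith
        calc P n n s * (∫⁻ x in Set.Icc 0 (1 - ∑ i, s i),
              ENNReal.ofReal (x ^ (-(1/2):ℝ))
                * ENNReal.ofReal ((1 - ∑ i, s i - x) ^ (-(1/2):ℝ)))
            ≤ P n n s * ENNReal.ofReal 6 := mul_le_mul_right (lint_beta hc hc1) _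
          _ = (P n n s * ENNReal.ofReal ((1 - ∑ i, s i) ^ 0)) * ENNReal.ofReal 6 := by
              simp
      calc (∫⁻ s in S n, P n n s * ∫⁻ x in Set.Icc 0 (1 - ∑ i, s i),
              ENNReal.ofReal (x ^ (-(1/2):ℝ))
                * ENNReal.ofReal ((1 - ∑ i, s i - x) ^ (-(1/2):ℝ)))
          ≤ ∫⁻ s in S n, (P n n s * ENNReal.ofReal ((1 - ∑ i, s i) ^ 0))
              * ENNReal.ofReal 6 := setLIntegral_mono' (measS n) hbound
        _ = (∫⁻ s in S n, P n n s * ENNReal.ofReal ((1 - ∑ i, s i) ^ 0))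
              * ENNReal.ofReal 6 := lintegral_mul_const' _ _ ENNReal.ofReal_ne_top
        _ ≤ ENNReal.ofReal (2 ^ n * (Nat.factorial 0) / (Nat.factorial (n - n + 0)))
              * ENNReal.ofReal 6 := mul_le_mul_left (W n n 0 le_rfl) _
        _ ≤ ENNReal.ofReal (π ^ (n+2) / (Nat.factorial (n + 1 - (n + 2)))) := by
            rw [← ENNReal.ofReal_mul (by positivity)]
            refine ENNReal.ofReal_le_ofReal ?_
            have h1 : n - n + 0 = 0 := by omega
            have h2 : n + 1 - (n + 2) = 0 := by omega
            rw [h1, h2]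
            simp only [Nat.factorial_zero, Nat.cast_one, mul_one, div_one]
            have hp2 : (2:ℝ) ≤ π := by linarith
            have hpow : (2:ℝ) ^ n ≤ π ^ n := pow_le_pow_left₀ (by norm_num) hp2 n
            have h6 : (6:ℝ) ≤ π ^ 2 := by nlinarith
            calc (2:ℝ) ^ n * 6 ≤ π ^ n * π ^ 2 :=
                  mul_le_mul hpow h6 (by norm_num) (pow_nonneg (by linarith) n)
              _ = π ^ (n + 2) := (pow_add π n 2).symm
end

section
/- For an (n+1)-times continuously differentiable function f and points x_0, ..., x_n ∈ ℝ, the sum over i = 0,...,n of the divided differences with the point x_i repeated, ∑_{i=0}^n f[x_0, ..., x_i, x_i, ..., x_n], equals the divided difference f'[x_0, x_1, ..., x_n] of the derivative f'. -/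
open MeasureTheory Set

/-- The divided difference `f[x₀,…,xₙ]`, defined for `Cⁿ` functions (and
arbitrary, possibly coinciding, points) via Hermite's integral representation
`f[x₀,…,xₙ] = ∫_{Δₙ} f⁽ⁿ⁾(s₀x₀ + ⋯ + sₙxₙ) dⁿs`; it agrees with the usual
recursive definition on distinct points and extends it continuously. -/
noncomputable def divDiff {E : Type*} [NormedAddCommGroup E] [NormedSpace ℝ E]
    (f : ℝ → E) (n : ℕ) (x : Fin (n + 1) → ℝ) : E :=
  ∫ s in {s : Fin n → ℝ | (∀ i, 0 ≤ s i) ∧ ∑ i, s i ≤ 1},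
    iteratedDeriv n f ((1 - ∑ i, s i) * x 0 + ∑ i : Fin n, s i * x i.succ)

namespace DDAux

def S (m : ℕ) : Set (Fin m → ℝ) := {s | (∀ i, 0 ≤ s i) ∧ ∑ i, s i ≤ 1}

lemma isCompact_S (m : ℕ) : IsCompact (S m) := by
  have hclosed : IsClosed (S m) := by
    have : S m = (⋂ i, {s : Fin m → ℝ | 0 ≤ s i}) ∩ {s | ∑ i, s i ≤ 1} := by
      ext s; simp [S]
    rw [this]
    exact ((isClosed_iInter fun i =>
      isClosed_le continuous_const (continuous_apply i))).inter
      (isClosed_le (by fun_prop) continuous_const)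
  refine IsCompact.of_isClosed_subset
    (isCompact_univ_pi fun _ : Fin m => isCompact_Icc (a := (0:ℝ)) (b := 1)) hclosed ?_
  rintro s ⟨h0, h1⟩ i -
  exact ⟨h0 i, le_trans (Finset.single_le_sum (fun j _ => h0 j) (Finset.mem_univ i)) h1⟩

lemma measurableSet_S (m : ℕ) : MeasurableSet (S m) :=
  (isCompact_S m).isClosed.measurableSet

def shear {n : ℕ} (c : Fin n → ℝ) : (ℝ × (Fin n → ℝ)) ≃ᵐ (ℝ × (Fin n → ℝ)) where
  toFun p := (p.1, p.2 + p.1 • c)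
  invFun p := (p.1, p.2 - p.1 • c)
  left_inv p := by simp
  right_inv p := by simp
  measurable_toFun := by
    show Measurable fun p : ℝ × (Fin n → ℝ) => (p.1, p.2 + p.1 • c); fun_prop
  measurable_invFun := by
    show Measurable fun p : ℝ × (Fin n → ℝ) => (p.1, p.2 - p.1 • c); fun_prop

lemma shear_mp {n : ℕ} (c : Fin n → ℝ) :
    MeasurePreserving (shear c) volume volume := by
  rw [MeasureTheory.Measure.volume_eq_prod]
  exact (MeasurePreserving.id (volume : Measure ℝ)).skew_product
    (g := fun a t => t + a • c) (by fun_prop)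
    (Filter.Eventually.of_forall fun a => map_add_right_eq_self volume (a • c))

lemma integral_succ_case {n : ℕ} (G : (Fin n → ℝ) → ℝ) (hG : Continuous G) (j : Fin n) :
    (∫ s in S (n+1),
        G ((fun k => s (j.succ.succAbove k)) + s j.succ • (Pi.single j 1 : Fin n → ℝ)))
      = ∫ t in S n, t j * G t := by
  classical
  set c : Fin n → ℝ := Pi.single j 1 with hc
  set F : (Fin (n+1) → ℝ) ≃ᵐ ℝ × (Fin n → ℝ) :=
    (MeasurableEquiv.piFinSuccAbove (fun _ => ℝ) j.succ).trans (shear c) with hF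
  have hFmp : MeasurePreserving F volume volume :=
    (shear_mp c).comp (volume_preserving_piFinSuccAbove (fun _ => ℝ) j.succ)
  have hFapp : ∀ s : Fin (n+1) → ℝ,
      F s = (s j.succ, (fun k => s (j.succ.succAbove k)) + s j.succ • c) := fun s => rfl
  set T : Set (ℝ × (Fin n → ℝ)) :=
    {p | 0 ≤ p.1 ∧ p.1 ≤ p.2 j ∧ (∀ k, 0 ≤ p.2 k) ∧ ∑ k, p.2 k ≤ 1} with hT
  have hsum2 : ∀ s : Fin (n+1) → ℝ,
      ∑ k, ((fun k => s (j.succ.succAbove k)) + s j.succ • c) k = ∑ k, s k := by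
    intro s
    rw [Fin.sum_univ_succAbove s j.succ]
    simp [Finset.sum_add_distrib, hc, Pi.single_apply, add_comm]
  have hpre : S (n+1) = F ⁻¹' T := by
    ext s
    rw [Set.mem_preimage, hFapp]
    simp only [hT, Set.mem_setOf_eq, S]
    constructor
    · rintro ⟨h0, h1⟩
      refine ⟨h0 _, ?_, fun k => ?_, ?_⟩
      · have := h0 (j.succ.succAbove j)
        simp only [Pi.add_apply, Pi.smul_apply, hc, Pi.single_apply]
        simp only [if_true, eq_self_iff_true, smul_eq_mul, mul_one, ite_true]
        linarith
      · have h1' := h0 (j.succ.succAbove k)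
        have h2' := h0 j.succ
        have h3 : (0:ℝ) ≤ s j.succ • c k := by
          by_cases hk : k = j <;> simp [hc, Pi.single_apply, hk, h2']
        exact add_nonneg h1' h3
      · rw [hsum2]; exact h1
    · rintro ⟨ha, haj, hk, hsum⟩
      have hsum' : ∑ i, s i ≤ 1 := by rw [← hsum2 s]; exact hsum
      refine ⟨?_, hsum'⟩
      rw [Fin.forall_iff_succAbove j.succ]
      refine ⟨ha, fun m => ?_⟩
      by_cases hm : m = j
      · subst hm
        simp only [Pi.add_apply, Pi.smul_apply, hc, Pi.single_apply] at haj
        simp only [if_true, eq_self_iff_true, smul_eq_mul, mul_one, ite_true] at haj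
        linarith
      · have := hk m
        simpa [hc, Pi.single_apply, hm] using this
  have hTclosed : IsClosed T := by
    have c1 : IsClosed {p : ℝ × (Fin n → ℝ) | 0 ≤ p.1} :=
      isClosed_le continuous_const continuous_fst
    have c2 : IsClosed {p : ℝ × (Fin n → ℝ) | p.1 ≤ p.2 j} :=
      isClosed_le continuous_fst ((continuous_apply j).comp continuous_snd)
    have c3 : IsClosed {p : ℝ × (Fin n → ℝ) | ∀ k, 0 ≤ p.2 k} := by
      have h34 : {p : ℝ × (Fin n → ℝ) | ∀ k, 0 ≤ p.2 k}
          = ⋂ k, {p : ℝ × (Fin n → ℝ) | 0 ≤ p.2 k} := by ext p; simp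
      rw [h34]
      exact isClosed_iInter fun k =>
        isClosed_le continuous_const ((continuous_apply k).comp continuous_snd)
    have c4 : IsClosed {p : ℝ × (Fin n → ℝ) | ∑ k, p.2 k ≤ 1} :=
      isClosed_le (continuous_finset_sum _ fun k _ =>
        (continuous_apply k).comp continuous_snd) continuous_const
    exact c1.inter (c2.inter (c3.inter c4))
  have hTsub : T ⊆ (Set.Icc (0:ℝ) 1) ×ˢ (Set.univ.pi fun _ : Fin n => Set.Icc (0:ℝ) 1) := by
    rintro ⟨a, t⟩ ⟨ha, haj, hk, hsum⟩
    have hkk : ∀ k, t k ≤ 1 := fun k =>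
      le_trans (Finset.single_le_sum (fun m _ => hk m) (Finset.mem_univ k)) hsum
    exact ⟨⟨ha, le_trans haj (hkk j)⟩, fun k _ => ⟨hk k, hkk k⟩⟩
  have hTcomp : IsCompact T := IsCompact.of_isClosed_subset
    (IsCompact.prod isCompact_Icc (isCompact_univ_pi fun _ => isCompact_Icc)) hTclosed hTsub
  have hTmeas : MeasurableSet T := hTclosed.measurableSet
  have hint : Integrable (T.indicator fun p : ℝ × (Fin n → ℝ) => G p.2) volume := by
    rw [integrable_indicator_iff hTmeas]
    exact ContinuousOn.integrableOn_compact hTcomp (hG.comp continuous_snd).continuousOn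
  calc ∫ s in S (n+1), G ((fun k => s (j.succ.succAbove k)) + s j.succ • c)
      = ∫ p in T, G p.2 := by
        rw [hpre]
        exact hFmp.setIntegral_preimage_emb F.measurableEmbedding (fun p => G p.2) T
    _ = ∫ p : ℝ × (Fin n → ℝ), T.indicator (fun p => G p.2) p :=
        (integral_indicator hTmeas).symm
    _ = ∫ t : Fin n → ℝ, ∫ a : ℝ, T.indicator (fun p : ℝ × (Fin n → ℝ) => G p.2) (a, t) := by
        rw [MeasureTheory.Measure.volume_eq_prod] at hint ⊢
        exact integral_prod_symm _ hint
    _ = ∫ t : Fin n → ℝ, (S n).indicator (fun t => t j * G t) t := by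
        congr 1; funext t
        by_cases ht : t ∈ S n
        · have heq : (fun a => T.indicator (fun p : ℝ × (Fin n → ℝ) => G p.2) (a, t))
              = (Set.Icc 0 (t j)).indicator (fun _ => G t) := by
            funext a
            by_cases hin : a ∈ Set.Icc (0:ℝ) (t j)
            · rw [Set.indicator_of_mem hin, Set.indicator_of_mem]
              exact ⟨hin.1, hin.2, ht.1, ht.2⟩
            · rw [Set.indicator_of_notMem hin, Set.indicator_of_notMem]
              rintro ⟨h1, h2, -, -⟩; exact hin ⟨h1, h2⟩
          rw [heq, integral_indicator_const _ measurableSet_Icc, Set.indicator_of_mem ht,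
            Real.volume_real_Icc, smul_eq_mul]
          rw [sub_zero, max_eq_left (ht.1 j)]
        · have heq : (fun a => T.indicator (fun p : ℝ × (Fin n → ℝ) => G p.2) (a, t))
              = fun _ => 0 := by
            funext a
            apply Set.indicator_of_notMem
            rintro ⟨-, -, hk, hsum⟩
            exact ht ⟨hk, hsum⟩
          rw [heq, integral_zero, Set.indicator_of_notMem ht]
    _ = ∫ t in S n, t j * G t := integral_indicator (measurableSet_S n)

end DDAux

namespace DDAux

lemma integral_zero_case {n : ℕ} (G : (Fin n → ℝ) → ℝ) (hG : Continuous G) :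
    (∫ s in S (n+1), G (fun k => s k.succ)) = ∫ t in S n, (1 - ∑ k, t k) * G t := by
  classical
  set F : (Fin (n+1) → ℝ) ≃ᵐ ℝ × (Fin n → ℝ) :=
    MeasurableEquiv.piFinSuccAbove (fun _ => ℝ) 0 with hF
  have hFmp : MeasurePreserving F volume volume :=
    volume_preserving_piFinSuccAbove (fun _ => ℝ) 0
  have hFapp : ∀ s : Fin (n+1) → ℝ, F s = (s 0, fun k => s k.succ) := by
    intro s
    have : F s = (s 0, fun k => s ((0 : Fin (n+1)).succAbove k)) := rfl
    rw [this]
    simp [Fin.zero_succAbove]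
  set T : Set (ℝ × (Fin n → ℝ)) :=
    {p | 0 ≤ p.1 ∧ (∀ k, 0 ≤ p.2 k) ∧ p.1 + ∑ k, p.2 k ≤ 1} with hT
  have hpre : S (n+1) = F ⁻¹' T := by
    ext s
    rw [Set.mem_preimage, hFapp]
    simp only [hT, Set.mem_setOf_eq, S]
    rw [Fin.sum_univ_succ s, Fin.forall_fin_succ]
    tauto
  have hTclosed : IsClosed T := by
    have c1 : IsClosed {p : ℝ × (Fin n → ℝ) | 0 ≤ p.1} :=
      isClosed_le continuous_const continuous_fst
    have c3 : IsClosed {p : ℝ × (Fin n → ℝ) | ∀ k, 0 ≤ p.2 k} := by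
      have h34 : {p : ℝ × (Fin n → ℝ) | ∀ k, 0 ≤ p.2 k}
          = ⋂ k, {p : ℝ × (Fin n → ℝ) | 0 ≤ p.2 k} := by ext p; simp
      rw [h34]
      exact isClosed_iInter fun k =>
        isClosed_le continuous_const ((continuous_apply k).comp continuous_snd)
    have c4 : IsClosed {p : ℝ × (Fin n → ℝ) | p.1 + ∑ k, p.2 k ≤ 1} :=
      isClosed_le (continuous_fst.add (continuous_finset_sum _ fun k _ =>
        (continuous_apply k).comp continuous_snd)) continuous_const
    exact c1.inter (c3.inter c4)
  have hTsub : T ⊆ (Set.Icc (0:ℝ) 1) ×ˢ (Set.univ.pi fun _ : Fin n => Set.Icc (0:ℝ) 1) := by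
    rintro ⟨a, t⟩ ⟨ha, hk, hsum⟩
    have h0 : (0:ℝ) ≤ ∑ k, t k := Finset.sum_nonneg fun k _ => hk k
    have hkk : ∀ k, t k ≤ 1 := fun k =>
      le_trans (Finset.single_le_sum (fun m _ => hk m) (Finset.mem_univ k)) (by linarith)
    exact ⟨⟨ha, by linarith⟩, fun k _ => ⟨hk k, hkk k⟩⟩
  have hTcomp : IsCompact T := IsCompact.of_isClosed_subset
    (IsCompact.prod isCompact_Icc (isCompact_univ_pi fun _ => isCompact_Icc)) hTclosed hTsub
  have hTmeas : MeasurableSet T := hTclosed.measurableSet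
  have hint : Integrable (T.indicator fun p : ℝ × (Fin n → ℝ) => G p.2) volume := by
    rw [integrable_indicator_iff hTmeas]
    exact ContinuousOn.integrableOn_compact hTcomp (hG.comp continuous_snd).continuousOn
  have harg : ∀ s : Fin (n+1) → ℝ, G (fun k => s k.succ) = (fun p : ℝ × (Fin n → ℝ) => G p.2) (F s) := by
    intro s; rw [hFapp]
  calc ∫ s in S (n+1), G (fun k => s k.succ)
      = ∫ p in T, G p.2 := by
        rw [hpre]
        simp_rw [harg]
        exact hFmp.setIntegral_preimage_emb F.measurableEmbedding (fun p => G p.2) T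
    _ = ∫ p : ℝ × (Fin n → ℝ), T.indicator (fun p => G p.2) p :=
        (integral_indicator hTmeas).symm
    _ = ∫ t : Fin n → ℝ, ∫ a : ℝ, T.indicator (fun p : ℝ × (Fin n → ℝ) => G p.2) (a, t) := by
        rw [MeasureTheory.Measure.volume_eq_prod] at hint ⊢
        exact integral_prod_symm _ hint
    _ = ∫ t : Fin n → ℝ, (S n).indicator (fun t => (1 - ∑ k, t k) * G t) t := by
        congr 1; funext t
        by_cases ht : t ∈ S n
        · have heq : (fun a => T.indicator (fun p : ℝ × (Fin n → ℝ) => G p.2) (a, t))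
              = (Set.Icc 0 (1 - ∑ k, t k)).indicator (fun _ => G t) := by
            funext a
            by_cases hin : a ∈ Set.Icc (0:ℝ) (1 - ∑ k, t k)
            · rw [Set.indicator_of_mem hin, Set.indicator_of_mem]
              exact ⟨hin.1, ht.1, by have := hin.2; linarith⟩
            · rw [Set.indicator_of_notMem hin, Set.indicator_of_notMem]
              rintro ⟨h1, -, h2⟩; exact hin ⟨h1, by linarith⟩
          rw [heq, integral_indicator_const _ measurableSet_Icc, Set.indicator_of_mem ht,
            Real.volume_real_Icc, smul_eq_mul]
          rw [sub_zero, max_eq_left (by have := ht.2; linarith)]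
        · have heq : (fun a => T.indicator (fun p : ℝ × (Fin n → ℝ) => G p.2) (a, t))
              = fun _ => 0 := by
            funext a
            apply Set.indicator_of_notMem
            rintro ⟨ha, hk, hsum⟩
            have h0 : (0:ℝ) ≤ ∑ k, t k := Finset.sum_nonneg fun k _ => hk k
            exact ht ⟨hk, by linarith⟩
          rw [heq, integral_zero, Set.indicator_of_notMem ht]
    _ = ∫ t in S n, (1 - ∑ k, t k) * G t := integral_indicator (measurableSet_S n)

end DDAux

namespace DDAux

lemma sum_shear {n : ℕ} (j : Fin n) (s : Fin (n+1) → ℝ) :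
    ∑ k, ((fun k => s (j.succ.succAbove k)) + s j.succ • (Pi.single j 1 : Fin n → ℝ)) k
      = ∑ k, s k := by
  rw [Fin.sum_univ_succAbove s j.succ]
  simp [Finset.sum_add_distrib, Pi.single_apply, add_comm]

end DDAux


/-- `∑_{i=0}^n f[x₀,…,xᵢ,xᵢ,…,xₙ] = f'[x₀,…,xₙ]`: summing the divided
differences of order `n+1` with the `i`-th point repeated gives the divided
difference of the derivative. -/
theorem sum_divDiff_repeated (n : ℕ) (f : ℝ → ℝ) (hf : ContDiff ℝ (n + 1) f)
    (x : Fin (n + 1) → ℝ) :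
    ∑ i : Fin (n + 1),
        divDiff f (n + 1) (fun j : Fin (n + 2) =>
          if h : (j : ℕ) ≤ (i : ℕ) then x ⟨j, by have := i.isLt; omega⟩
          else x ⟨(j : ℕ) - 1, by have := j.isLt; omega⟩) =
      divDiff (deriv f) n x := by
  classical
  have hdf : ContDiff ℝ n (deriv f) := by
    have h : ContDiff ℝ ((n : WithTop ℕ∞) + 1) f := by exact_mod_cast hf
    exact (contDiff_succ_iff_deriv.mp h).2.2
  set G : (Fin n → ℝ) → ℝ :=
    fun t => iteratedDeriv n (deriv f) ((1 - ∑ k, t k) * x 0 + ∑ k : Fin n, t k * x k.succ)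
    with hGdef
  have hG : Continuous G := by
    apply (hdf.continuous_iteratedDeriv n le_rfl).comp
    fun_prop
  have e0 : divDiff f (n+1) (fun j : Fin (n + 2) =>
        if h : (j : ℕ) ≤ ((0 : Fin (n+1)) : ℕ) then x ⟨j, by have := (0 : Fin (n+1)).isLt; omega⟩
        else x ⟨(j : ℕ) - 1, by have := j.isLt; omega⟩)
      = ∫ s in DDAux.S (n+1), G (fun k => s k.succ) := by
    unfold divDiff
    rw [iteratedDeriv_succ']
    refine congrArg (integral _) (funext fun s => ?_)
    congr 1
    have hY0 : (if h : ((0 : Fin (n+2)) : ℕ) ≤ ((0 : Fin (n+1)) : ℕ)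
        then x ⟨(0 : Fin (n+2)), by have := (0 : Fin (n+1)).isLt; omega⟩
        else x ⟨((0 : Fin (n+2)) : ℕ) - 1, by have := (0 : Fin (n+2)).isLt; omega⟩) = x 0 := by
      rw [dif_pos (by simp)]
      exact congrArg x (Fin.ext (by simp))
    have hYs : ∀ i : Fin (n+1),
        (if h : ((i.succ : Fin (n+2)) : ℕ) ≤ ((0 : Fin (n+1)) : ℕ)
          then x ⟨(i.succ : Fin (n+2)), by have := (0 : Fin (n+1)).isLt; omega⟩
          else x ⟨((i.succ : Fin (n+2)) : ℕ) - 1, by have := (i.succ : Fin (n+2)).isLt; omega⟩)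
        = x i := by
      intro i
      rw [dif_neg (by simp)]
      exact congrArg x (Fin.ext (by simp))
    beta_reduce
    rw [hY0]
    simp_rw [hYs]
    rw [Fin.sum_univ_succ (f := fun i : Fin (n+1) => s i),
      Fin.sum_univ_succ (f := fun i : Fin (n+1) => s i * x i)]
    ring
  have hsa : ∀ m : Fin n, ∀ j : Fin n,
      ((j.succ.succAbove m : Fin (n+1)) : ℕ)
        = if (m : ℕ) < (j : ℕ) + 1 then (m : ℕ) else (m : ℕ) + 1 := by
    intro m j
    rcases lt_or_ge m.castSucc j.succ with hm | hm
    · rw [Fin.succAbove_of_castSucc_lt _ _ hm]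
      have h' : (m : ℕ) < (j : ℕ) + 1 := by simpa [Fin.lt_def] using hm
      simp [h']
    · rw [Fin.succAbove_of_le_castSucc _ _ hm]
      have h' : (j : ℕ) + 1 ≤ (m : ℕ) := by simpa [Fin.le_def] using hm
      rw [if_neg (by omega)]
      simp [Fin.val_succ]
  have ej : ∀ j : Fin n, divDiff f (n+1) (fun l : Fin (n + 2) =>
        if h : (l : ℕ) ≤ ((j.succ : Fin (n+1)) : ℕ)
          then x ⟨l, by have := (j.succ : Fin (n+1)).isLt; omega⟩
          else x ⟨(l : ℕ) - 1, by have := l.isLt; omega⟩)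
      = ∫ s in DDAux.S (n+1),
          G ((fun k => s (j.succ.succAbove k)) + s j.succ • (Pi.single j 1 : Fin n → ℝ)) := by
    intro j
    unfold divDiff
    rw [iteratedDeriv_succ']
    refine congrArg (integral _) (funext fun s => ?_)
    congr 1
    beta_reduce
    have hY : ∀ l : Fin (n+2),
        (if h : (l : ℕ) ≤ ((j.succ : Fin (n+1)) : ℕ)
          then x ⟨l, by have := (j.succ : Fin (n+1)).isLt; omega⟩
          else x ⟨(l : ℕ) - 1, by have := l.isLt; omega⟩)
        = x ⟨if (l : ℕ) ≤ (j : ℕ) + 1 then (l : ℕ) else (l : ℕ) - 1,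
            by have := l.isLt; split <;> omega⟩ := by
      intro l
      by_cases h : (l : ℕ) ≤ ((j.succ : Fin (n+1)) : ℕ)
      · rw [dif_pos h]
        refine congrArg x (Fin.ext ?_)
        exact (if_pos (by simpa [Fin.val_succ] using h)).symm
      · rw [dif_neg h]
        refine congrArg x (Fin.ext ?_)
        exact (if_neg (by simpa [Fin.val_succ] using h)).symm
    simp_rw [hY]
    rw [DDAux.sum_shear j s]
    have hx0 : x ⟨if ((0 : Fin (n+2)) : ℕ) ≤ (j : ℕ) + 1 then ((0 : Fin (n+2)) : ℕ)
        else ((0 : Fin (n+2)) : ℕ) - 1, by split <;> omega⟩ = x 0 := by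
      refine congrArg x (Fin.ext ?_)
      simp
    rw [hx0]
    have hRsum : ∑ k : Fin n,
        ((fun k => s (j.succ.succAbove k)) + s j.succ • (Pi.single j 1 : Fin n → ℝ)) k * x k.succ
        = (∑ m : Fin n, s (j.succ.succAbove m) * x m.succ) + s j.succ * x j.succ := by
      simp only [Pi.add_apply, Pi.smul_apply, smul_eq_mul, add_mul, Finset.sum_add_distrib,
        Pi.single_apply, ite_mul, one_mul, zero_mul, mul_ite, mul_zero, mul_one]
      congr 1
      simp [Finset.sum_ite_eq']
    rw [hRsum]
    have hLsum : ∑ i : Fin (n+1), s i *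
        x ⟨if ((i.succ : Fin (n+2)) : ℕ) ≤ (j : ℕ) + 1 then ((i.succ : Fin (n+2)) : ℕ)
            else ((i.succ : Fin (n+2)) : ℕ) - 1, by have := (i.succ : Fin (n+2)).isLt; split <;> omega⟩
        = s j.succ * x j.succ + ∑ m : Fin n, s (j.succ.succAbove m) * x m.succ := by
      rw [Fin.sum_univ_succAbove (fun i : Fin (n+1) => s i *
        x ⟨if ((i.succ : Fin (n+2)) : ℕ) ≤ (j : ℕ) + 1 then ((i.succ : Fin (n+2)) : ℕ)
            else ((i.succ : Fin (n+2)) : ℕ) - 1,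
            by have := (i.succ : Fin (n+2)).isLt; split <;> omega⟩) j.succ]
      congr 1
      · congr 1
        refine congrArg x (Fin.ext ?_)
        simp [Fin.val_succ]
      · refine Finset.sum_congr rfl fun m _ => ?_
        congr 1
        refine congrArg x (Fin.ext ?_)
        have hv := hsa m j
        simp only [Fin.val_succ, hv]
        by_cases hm' : (m : ℕ) < (j : ℕ) + 1
        · rw [if_pos hm', if_pos (by omega)]
        · rw [if_neg hm', if_neg (by omega)]
          omega
    rw [hLsum]
    ring
  rw [Fin.sum_univ_succ]
  rw [e0, DDAux.integral_zero_case G hG]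
  rw [Finset.sum_congr rfl fun j _ => (ej j).trans (DDAux.integral_succ_case G hG j)]
  have h2int : ∀ j : Fin n, IntegrableOn (fun t => t j * G t) (DDAux.S n) volume :=
    fun j => ContinuousOn.integrableOn_compact (DDAux.isCompact_S n)
      (((continuous_apply j).mul hG).continuousOn)
  have h1int : IntegrableOn (fun t => (1 - ∑ k, t k) * G t) (DDAux.S n) volume :=
    ContinuousOn.integrableOn_compact (DDAux.isCompact_S n)
      (((continuous_const.sub (continuous_finset_sum _ fun k _ => continuous_apply k)).mul
        hG).continuousOn)
  rw [← integral_finset_sum Finset.univ (fun j _ => h2int j)]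
  rw [← integral_add h1int (integrable_finset_sum _ fun j _ => h2int j)]
  have hpt : ∀ t : Fin n → ℝ, ((1 - ∑ k, t k) * G t + ∑ j : Fin n, t j * G t) = G t := by
    intro t; rw [← Finset.sum_mul]; ring
  simp_rw [hpt]
  rfl
end
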